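/- arXiv:1805.03613 — 10 statements merged into one kernel-verified Lean document; each statement's English description precedes it below -/
import Mathlib

section
/- For all integers N_R ≥ 1 and N_T ≥ 1 and every real μ_R with 0 < μ_R ≤ 1, the identity ∑_{m=0}^{N_R-1} C(N_R-1, m) · ((N_T + (N_R-m-1)/(m+1)) / N_T) · μ_R^m · (1-μ_R)^{N_R-m} = ((N_T-1)/N_T) · (1-μ_R) + ((1-μ_R)/(N_T μ_R)) · (1 - (1-μ_R)^{N_R}) holds, where C(a,b) denotes the binomial coefficient. -/
theorem access_load_closed_form (N_R N_T : ℕ) (hNR : 1 ≤ N_R) (hNT : 1 ≤ N_T)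
    (μR : ℝ) (hμ0 : 0 < μR) (hμ1 : μR ≤ 1) :
    ∑ m ∈ Finset.range N_R,
        ((N_R - 1).choose m : ℝ) *
          (((N_T : ℝ) + ((N_R : ℝ) - m - 1) / (m + 1)) / N_T) *
          μR ^ m * (1 - μR) ^ (N_R - m)
      = (((N_T : ℝ) - 1) / N_T) * (1 - μR)
        + ((1 - μR) / (N_T * μR)) * (1 - (1 - μR) ^ N_R) := by
  obtain ⟨n, rfl⟩ : ∃ n, N_R = n + 1 := ⟨N_R - 1, by omega⟩
  have hT : (N_T : ℝ) ≠ 0 := Nat.cast_ne_zero.mpr (by omega)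
  have hμ : μR ≠ 0 := ne_of_gt hμ0
  -- binomial theorem fact
  have K : ∑ k ∈ Finset.range (n + 1), μR ^ k * (1 - μR) ^ (n - k) * (n.choose k : ℝ) = 1 := by
    rw [← add_pow]; norm_num
  -- rewrite each term
  have key : ∀ m ∈ Finset.range (n + 1),
      ((n + 1 - 1).choose m : ℝ) *
          (((N_T : ℝ) + ((↑(n + 1) : ℝ) - m - 1) / (m + 1)) / N_T) *
          μR ^ m * (1 - μR) ^ (n + 1 - m)
      = (n.choose m : ℝ) * μR ^ m * (1 - μR) ^ (n + 1 - m)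
        + (1 / N_T) * (n.choose (m + 1) : ℝ) * μR ^ m * (1 - μR) ^ (n + 1 - m) := by
    intro m hm
    rw [Finset.mem_range] at hm
    have hmn : m ≤ n := by omega
    have hc : (n.choose (m + 1) : ℝ) * ((m : ℝ) + 1) = (n.choose m : ℝ) * ((n : ℝ) - m) := by
      have := Nat.choose_succ_right_eq n m
      have h2 : ((n.choose (m + 1) * (m + 1) : ℕ) : ℝ) = ((n.choose m * (n - m) : ℕ) : ℝ) :=
        Nat.cast_inj.mpr this
      push_cast [Nat.cast_sub hmn] at h2
      linarith [h2]
    have hm1 : (m : ℝ) + 1 ≠ 0 := by positivity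
    simp only [Nat.add_sub_cancel]
    push_cast
    field_simp
    linear_combination (-(1 - μR) ^ (n + 1 - m)) * hc
  rw [Finset.sum_congr rfl key, Finset.sum_add_distrib]
  -- Sum A
  have hA : ∑ m ∈ Finset.range (n + 1), (n.choose m : ℝ) * μR ^ m * (1 - μR) ^ (n + 1 - m)
      = 1 - μR := by
    have : ∀ m ∈ Finset.range (n + 1),
        (n.choose m : ℝ) * μR ^ m * (1 - μR) ^ (n + 1 - m)
        = (μR ^ m * (1 - μR) ^ (n - m) * (n.choose m : ℝ)) * (1 - μR) := by
      intro m hm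
      rw [Finset.mem_range] at hm
      have : n + 1 - m = (n - m) + 1 := by omega
      rw [this, pow_succ]
      ring
    rw [Finset.sum_congr rfl this, ← Finset.sum_mul, K, one_mul]
  -- Sum B
  have hB : μR * ∑ m ∈ Finset.range (n + 1),
        (1 / N_T : ℝ) * (n.choose (m + 1) : ℝ) * μR ^ m * (1 - μR) ^ (n + 1 - m)
      = (1 / N_T) * ((1 - μR) ^ 2 - (1 - μR) ^ (n + 2)) := by
    have h1 : ∑ k ∈ Finset.range (n + 2), (n.choose k : ℝ) * μR ^ k * (1 - μR) ^ (n + 2 - k)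
        = (1 - μR) ^ 2 := by
      rw [Finset.sum_range_succ]
      simp only [Nat.choose_succ_self, Nat.cast_zero, zero_mul]
      have : ∀ k ∈ Finset.range (n + 1),
          (n.choose k : ℝ) * μR ^ k * (1 - μR) ^ (n + 2 - k)
          = (μR ^ k * (1 - μR) ^ (n - k) * (n.choose k : ℝ)) * (1 - μR) ^ 2 := by
        intro k hk
        rw [Finset.mem_range] at hk
        have : n + 2 - k = (n - k) + 2 := by omega
        rw [this, pow_add]
        ring
      rw [Finset.sum_congr rfl this, ← Finset.sum_mul, K]
      ring
    have h2 : ∑ k ∈ Finset.range (n + 2), (n.choose k : ℝ) * μR ^ k * (1 - μR) ^ (n + 2 - k)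
        = (∑ m ∈ Finset.range (n + 1),
            (n.choose (m + 1) : ℝ) * μR ^ (m + 1) * (1 - μR) ^ (n + 1 - m))
          + (1 - μR) ^ (n + 2) := by
      rw [Finset.sum_range_succ']
      simp only [pow_zero, Nat.choose_zero_right, Nat.cast_one, one_mul, mul_one,
        Nat.sub_zero]
      congr 1
      apply Finset.sum_congr rfl
      intro m hm
      rw [Finset.mem_range] at hm
      have he : n + 2 - (m + 1) = n + 1 - m := by omega
      rw [he]
    rw [Finset.mul_sum]
    have h3 : ∀ m ∈ Finset.range (n + 1),
        μR * ((1 / N_T : ℝ) * (n.choose (m + 1) : ℝ) * μR ^ m * (1 - μR) ^ (n + 1 - m))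
        = (1 / N_T) * ((n.choose (m + 1) : ℝ) * μR ^ (m + 1) * (1 - μR) ^ (n + 1 - m)) := by
      intro m hm; rw [pow_succ]; ring
    rw [Finset.sum_congr rfl h3, ← Finset.mul_sum]
    have h4 : ∑ m ∈ Finset.range (n + 1),
        (n.choose (m + 1) : ℝ) * μR ^ (m + 1) * (1 - μR) ^ (n + 1 - m)
        = (1 - μR) ^ 2 - (1 - μR) ^ (n + 2) := by
      have := h2.symm.trans h1
      linarith
    rw [h4]
  rw [hA]
  have hBval : ∑ m ∈ Finset.range (n + 1),
        (1 / N_T : ℝ) * (n.choose (m + 1) : ℝ) * μR ^ m * (1 - μR) ^ (n + 1 - m)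
      = (1 / N_T) * ((1 - μR) ^ 2 - (1 - μR) ^ (n + 2)) / μR := by
    rw [eq_div_iff hμ]
    linear_combination hB
  have hp : (1 - μR) ^ (n + 2) = (1 - μR) ^ (n + 1) * (1 - μR) := by rw [pow_succ]
  rw [hBval, hp]
  field_simp
  ring
end

section
/- For every integer N_R ≥ 1 and every real μ_R with 0 < μ_R ≤ 1, ((1-μ_R)/μ_R) · (1 - (1-μ_R)^{N_R}) ≤ 12 · max_{l ∈ {1,...,N_R}} l · (1-μ_R)^l. -/
lemma quarter_rpow_le (μ : ℝ) (h0 : 0 ≤ μ) (h1 : μ ≤ 1/2) :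
    (1/4 : ℝ) ^ μ ≤ 1 - μ := by
  have h := convexOn_exp.2 (Set.mem_univ (0:ℝ)) (Set.mem_univ (Real.log (1/2)))
      (show (0:ℝ) ≤ 1 - 2*μ by linarith) (show (0:ℝ) ≤ 2*μ by linarith)
      (show (1 - 2*μ) + 2*μ = 1 by ring)
  simp only [smul_eq_mul] at h
  have hlog : Real.exp (Real.log (1/2)) = 1/2 := Real.exp_log (by norm_num)
  rw [Real.rpow_def_of_pos (by norm_num)]
  have hl4 : Real.log (1/4:ℝ) = 2 * Real.log (1/2) := by
    rw [show (1/4:ℝ) = (1/2)^2 by norm_num, Real.log_pow]; push_cast; ring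
  calc Real.exp (Real.log (1/4) * μ)
      = Real.exp ((1-2*μ)*0 + 2*μ*Real.log (1/2)) := by rw [hl4]; ring_nf
    _ ≤ (1-2*μ)*Real.exp 0 + 2*μ*Real.exp (Real.log (1/2)) := h
    _ = 1 - μ := by rw [Real.exp_zero, hlog]; ring

theorem fronthaul_gap_le_twelve (N_R : ℕ) (hN : 1 ≤ N_R) (μR : ℝ)
    (hμ0 : 0 < μR) (hμ1 : μR ≤ 1) :
    ((1 - μR) / μR) * (1 - (1 - μR) ^ N_R)
      ≤ 12 * (Finset.Icc 1 N_R).sup' (Finset.nonempty_Icc.mpr hN)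
          (fun l => (l : ℝ) * (1 - μR) ^ l) := by
  have hq0 : (0:ℝ) ≤ 1 - μR := by linarith
  have hq1 : (1 - μR) ≤ 1 := by linarith
  have hqN0 : (0:ℝ) ≤ (1 - μR) ^ N_R := pow_nonneg hq0 _
  have hqN1 : (1 - μR) ^ N_R ≤ 1 := pow_le_one₀ hq0 hq1
  by_cases hcase : (1:ℝ)/2 ≤ μR
  · -- easy case: compare with l = 1
    have h1 : (1:ℕ) ∈ Finset.Icc 1 N_R := by simp [hN]
    have hs := Finset.le_sup' (fun l : ℕ => (l : ℝ) * (1 - μR) ^ l) h1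
    simp only [Nat.cast_one, one_mul, pow_one] at hs
    have hLHS : ((1 - μR) / μR) * (1 - (1 - μR) ^ N_R) ≤ 2 * (1 - μR) := by
      rw [div_mul_eq_mul_div, div_le_iff₀ hμ0]
      nlinarith
    linarith
  · push_neg at hcase
    set k := ⌈1/(2*μR)⌉₊ with hkdef
    have hk1 : 1 ≤ k := Nat.one_le_iff_ne_zero.mpr (by
      have : (0:ℝ) < 1/(2*μR) := by positivity
      exact Nat.ceil_pos.mpr this |>.ne')
    have hklt : (k:ℝ) < 1/(2*μR) + 1 := Nat.ceil_lt_add_one (by positivity)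
    have hkge : 1/(2*μR) ≤ (k:ℝ) := Nat.le_ceil _
    have hkμ : (k:ℝ) * μR ≤ 1 := by
      have h2 : (k:ℝ) * (2*μR) < (1/(2*μR)) * (2*μR) + 2*μR := by nlinarith
      have h3 : (1/(2*μR)) * (2*μR) = 1 := by field_simp
      nlinarith
    -- (1-μ)^k ≥ 1/4
    have hq4 : (1/4:ℝ) ≤ (1 - μR) ^ k := by
      have ha : (1/4:ℝ)^(μR:ℝ) ≤ 1 - μR := quarter_rpow_le μR hμ0.le hcase.le
      have hb : ((1/4:ℝ)^(μR:ℝ))^k ≤ (1 - μR)^k :=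
        pow_le_pow_left₀ (Real.rpow_nonneg (by norm_num) _) ha k
      have hc : ((1/4:ℝ)^(μR:ℝ))^k = (1/4:ℝ)^(μR * (k:ℝ)) := by
        rw [← Real.rpow_natCast ((1/4:ℝ)^(μR:ℝ)) k, ← Real.rpow_mul (by norm_num)]
      have hd : (1/4:ℝ)^(1:ℝ) ≤ (1/4:ℝ)^(μR * (k:ℝ)) :=
        Real.rpow_le_rpow_of_exponent_ge (by norm_num) (by norm_num) (by nlinarith)
      rw [Real.rpow_one] at hd
      rw [hc] at hb
      linarith
    set m := min N_R k with hmdef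
    have hm1 : 1 ≤ m := le_min hN hk1
    have hmem : m ∈ Finset.Icc 1 N_R := Finset.mem_Icc.mpr ⟨hm1, min_le_left _ _⟩
    have hs := Finset.le_sup' (fun l : ℕ => (l : ℝ) * (1 - μR) ^ l) hmem
    have hqm : (1/4:ℝ) ≤ (1 - μR) ^ m := by
      have : (1 - μR) ^ k ≤ (1 - μR) ^ m :=
        pow_le_pow_of_le_one hq0 hq1 (min_le_right _ _)
      linarith
    have hm0 : (0:ℝ) ≤ (m:ℝ) := Nat.cast_nonneg m
    have hsup : 3 * (m:ℝ) ≤ 12 * ((m:ℝ) * (1 - μR) ^ m) := by nlinarith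
    have hLHS : ((1 - μR) / μR) * (1 - (1 - μR) ^ N_R) ≤ 3 * (m:ℝ) := by
      rcases le_total N_R k with hNk | hkN
      · -- m = N_R, use Bernoulli
        have hm : m = N_R := min_eq_left hNk
        have hber : 1 + (N_R:ℝ) * (-μR) ≤ (1 + (-μR)) ^ N_R :=
          one_add_mul_le_pow (by linarith) N_R
        have hber' : 1 - (1 - μR) ^ N_R ≤ (N_R:ℝ) * μR := by
          have : (1 + (-μR)) = 1 - μR := by ring
          rw [this] at hber; linarith
        have hdiv : (0:ℝ) ≤ (1 - μR) / μR := div_nonneg hq0 hμ0.le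
        have h5 : ((1 - μR) / μR) * (1 - (1 - μR) ^ N_R)
            ≤ ((1 - μR) / μR) * ((N_R:ℝ) * μR) :=
          mul_le_mul_of_nonneg_left hber' hdiv
        have h6 : ((1 - μR) / μR) * ((N_R:ℝ) * μR) = (1 - μR) * (N_R:ℝ) := by
          field_simp
        rw [h6] at h5
        have : (1 - μR) * (N_R:ℝ) ≤ 3 * (N_R:ℝ) := by
          nlinarith [Nat.cast_nonneg (α := ℝ) N_R]
        rw [hm]; linarith
      · -- m = k, LHS ≤ 1/μ ≤ 2k
        have hm : m = k := min_eq_right hkN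
        have hLHS1 : ((1 - μR) / μR) * (1 - (1 - μR) ^ N_R) ≤ (1 - μR) / μR := by
          nlinarith [div_nonneg hq0 hμ0.le]
        have hone : (1/(2*μR)) * (2*μR) = 1 := by field_simp
        have h7 : (1 - μR) / μR ≤ 2 * (k:ℝ) := by
          rw [div_le_iff₀ hμ0]
          nlinarith
        have hk0 : (0:ℝ) ≤ (k:ℝ) := Nat.cast_nonneg k
        rw [hm]
        linarith
    linarith
end

section
/- Let N_R ≥ 13 be an integer and μ_R a real with 1/N_R ≤ μ_R < 1/12. Then ((1-μ_R)/μ_R) · (1 - (1-μ_R)^{N_R}) < 8 · max_{l ∈ {1,...,N_R}} l · (1-μ_R)^l. -/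
theorem fronthaul_gap_mid_regime (N_R : ℕ) (hN : 13 ≤ N_R) (μR : ℝ)
    (hμlo : 1 / (N_R : ℝ) ≤ μR) (hμhi : μR < 1 / 12) :
    ((1 - μR) / μR) * (1 - (1 - μR) ^ N_R)
      < 8 * (Finset.Icc 1 N_R).sup'
          (Finset.nonempty_Icc.mpr (le_trans (by norm_num) hN))
          (fun l => (l : ℝ) * (1 - μR) ^ l) := by
  have hNpos : (0:ℝ) < N_R := by positivity
  have hμpos : 0 < μR := lt_of_lt_of_le (by positivity) hμlo
  have hμ1 : μR < 1 := by linarith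
  set l : ℕ := ⌊1 / (4 * μR)⌋₊ with hl
  have hx : (0:ℝ) ≤ 1 / (4 * μR) := by positivity
  have hlle : (l:ℝ) ≤ 1 / (4 * μR) := Nat.floor_le hx
  have hlgt : 1 / (4 * μR) < l + 1 := Nat.lt_floor_add_one _
  have h3 : (3:ℝ) ≤ 1 / (4 * μR) := by
    rw [le_div_iff₀ (by positivity)]; linarith
  have hl3 : 3 ≤ l := Nat.le_floor h3
  have hl3' : (3:ℝ) ≤ (l:ℝ) := by exact_mod_cast hl3
  have hμN : 1 ≤ N_R * μR := by
    rw [div_le_iff₀ hNpos] at hμlo; linarith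
  have hlN : l ≤ N_R := by
    have : (l:ℝ) ≤ N_R := by
      have : 1 / (4 * μR) ≤ N_R := by
        rw [div_le_iff₀ (by positivity)]; nlinarith
      linarith
    exact_mod_cast this
  have hmem : l ∈ Finset.Icc 1 N_R := Finset.mem_Icc.mpr ⟨by omega, hlN⟩
  have hsup := Finset.le_sup' (fun l : ℕ => (l : ℝ) * (1 - μR) ^ l) hmem
  have hbern : 1 + (l:ℝ) * (-μR) ≤ (1 + -μR) ^ l :=
    one_add_mul_le_pow (by linarith) l
  have hlμ : (l:ℝ) * μR ≤ 1 / 4 := by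
    have h4 := (le_div_iff₀ (by positivity : (0:ℝ) < 4 * μR)).mp hlle
    linarith
  have hpow : (3:ℝ)/4 ≤ (1 - μR) ^ l := by
    have : (1:ℝ) + -μR = 1 - μR := by ring
    rw [this] at hbern; linarith
  have hlge : 1 / (4 * μR) - 1 < (l:ℝ) := by linarith
  -- LHS ≤ (1-μR)/μR = 1/μR - 1
  have hpN : (0:ℝ) < (1 - μR) ^ N_R := pow_pos (by linarith) _
  have hpN1 : (1 - μR) ^ N_R ≤ 1 := pow_le_one₀ (by linarith) (by linarith)
  have hfrac : (1 - μR) / μR = 1 / μR - 1 := by field_simp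
  have hLHS : ((1 - μR) / μR) * (1 - (1 - μR) ^ N_R) ≤ 1 / μR - 1 := by
    rw [hfrac.symm] at *
    have h1 : (0:ℝ) ≤ (1 - μR) / μR := div_nonneg (by linarith) hμpos.le
    nlinarith
  have hkey : 1 / μR - 1 < 8 * ((l:ℝ) * (1 - μR) ^ l) := by
    have h1 : (6:ℝ) * (1 / (4 * μR) - 1) < 6 * l := by linarith
    have h2 : (6:ℝ) * l ≤ 8 * ((l:ℝ) * (1 - μR) ^ l) := by nlinarith
    have h3 : 1 / μR - 1 ≤ 6 * (1 / (4 * μR) - 1) := by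
      have he : (6:ℝ) * (1 / (4 * μR)) = (3/2) * (1 / μR) := by
        field_simp; ring
      have h12 : (10:ℝ) ≤ 1 / μR := by
        rw [le_div_iff₀ hμpos]; linarith
      rw [mul_sub, he]; linarith
    linarith
  calc ((1 - μR) / μR) * (1 - (1 - μR) ^ N_R) ≤ 1 / μR - 1 := hLHS
    _ < 8 * ((l:ℝ) * (1 - μR) ^ l) := hkey
    _ ≤ _ := by
        have h8 : (0:ℝ) ≤ 8 := by norm_num
        exact mul_le_mul_of_nonneg_left hsup h8
end

section
/- Let N_R ≥ 13 be an integer and μ_R a real with 0 < μ_R < 1/N_R. Then 1 - (1-μ_R)^{N_R} < 8 · μ_R · ⌊N_R/4⌋ · (1-μ_R)^{⌊N_R/4⌋ - 1}, where ⌊N_R/4⌋ denotes the integer floor of N_R/4. -/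
theorem fronthaul_gap_small_mu_regime (N_R : ℕ) (hN : 13 ≤ N_R) (μR : ℝ)
    (hμ0 : 0 < μR) (hμ : μR < 1 / (N_R : ℝ)) :
    1 - (1 - μR) ^ N_R
      < 8 * μR * (N_R / 4 : ℕ) * (1 - μR) ^ (N_R / 4 - 1) := by
  set l := N_R / 4 with hl
  have hl3 : 3 ≤ l := by omega
  have hNpos : (0:ℝ) < (N_R:ℝ) := by positivity
  have hμN : μR * N_R < 1 := by
    have := (lt_div_iff₀ hNpos).mp hμ; linarith
  have hN13 : (13:ℝ) ≤ (N_R:ℝ) := by exact_mod_cast hN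
  have hμ1 : μR < 1 := by nlinarith
  have h1μ : 0 < 1 - μR := by linarith
  -- Bernoulli bounds
  have hbern1 : 1 - (N_R:ℝ) * μR ≤ (1-μR)^N_R := by
    have h := one_add_mul_le_pow (a := -μR) (by linarith : (-2:ℝ) ≤ -μR) N_R
    have : (1 + -μR) = 1 - μR := by ring
    rw [this] at h; linarith [h]
  have hcast : ((l - 1 : ℕ) : ℝ) = (l:ℝ) - 1 := by
    have : 1 ≤ l := by omega
    push_cast [Nat.cast_sub this]; ring
  have hbern2 : 1 - ((l:ℝ) - 1) * μR ≤ (1-μR)^(l-1) := by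
    have h := one_add_mul_le_pow (a := -μR) (by linarith : (-2:ℝ) ≤ -μR) (l-1)
    have h2 : (1 + -μR) = 1 - μR := by ring
    rw [h2] at h; rw [← hcast]; linarith [h]
  -- arithmetic facts about l
  have hlle : (l:ℝ) ≤ (N_R:ℝ)/4 := by
    have : 4 * l ≤ N_R := by omega
    have := (Nat.cast_le (α := ℝ)).mpr this
    push_cast at this; linarith
  have hNl : (N_R:ℝ) < 6 * l := by
    have : N_R < 6 * l := by omega
    exact_mod_cast this
  have h34 : (3:ℝ)/4 < 1 - ((l:ℝ) - 1) * μR := by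
    have hlpos : (0:ℝ) < (l:ℝ) := by positivity
    nlinarith [mul_pos hμ0 hlpos]
  have hlpos : (0:ℝ) < (l:ℝ) := by positivity
  have hkey : (N_R:ℝ) * μR < 8 * μR * l * (1 - ((l:ℝ)-1) * μR) := by
    nlinarith [mul_pos hμ0 hlpos]
  have hrhs : 8 * μR * (l:ℝ) * (1 - ((l:ℝ)-1) * μR) ≤ 8 * μR * l * (1-μR)^(l-1) := by
    have h8 : 0 ≤ 8 * μR * (l:ℝ) := by positivity
    exact mul_le_mul_of_nonneg_left hbern2 h8
  linarith
end

section
/- Let N_T and N_R be integers with 2 ≤ N_T ≤ N_R and let μ_R be a real with 0 < μ_R ≤ 1. Then ((N_T-1)/N_T)·(1-μ_R) + ((1-μ_R)/(N_T μ_R))·(1 - (1-μ_R)^{N_R}) ≤ 12 · max_{l ∈ {1,...,N_R}} [ l·(1-μ_R)^l / min{l, N_T} ]. -/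
set_option maxHeartbeats 1000000 in

theorem access_gap_le_twelve (N_T N_R : ℕ) (hNT : 2 ≤ N_T) (hTN : N_T ≤ N_R)
    (μR : ℝ) (hμ0 : 0 < μR) (hμ1 : μR ≤ 1) :
    (((N_T : ℝ) - 1) / N_T) * (1 - μR)
        + ((1 - μR) / (N_T * μR)) * (1 - (1 - μR) ^ N_R)
      ≤ 12 * (Finset.Icc 1 N_R).sup'
          (Finset.nonempty_Icc.mpr (le_trans (le_trans (by norm_num) hNT) hTN))
          (fun l => (l : ℝ) * (1 - μR) ^ l / (min l N_T : ℕ)) := by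
  have hNR2 : 2 ≤ N_R := le_trans hNT hTN
  set x : ℝ := 1 - μR with hxdef
  clear_value x
  have hx0 : 0 ≤ x := by simp [hxdef]; linarith
  have hx1 : x ≤ 1 := by simp [hxdef]; linarith
  have hNT0 : (0:ℝ) < (N_T:ℝ) := by exact_mod_cast (by omega : 0 < N_T)
  have hNR0 : (0:ℝ) < (N_R:ℝ) := by exact_mod_cast (by omega : 0 < N_R)
  have hA : (0:ℝ) < (N_T:ℝ) * μR := by positivity
  set S := (Finset.Icc 1 N_R).sup'
          (Finset.nonempty_Icc.mpr (le_trans (le_trans (by norm_num) hNT) hTN))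
          (fun l => (l : ℝ) * x ^ l / (min l N_T : ℕ)) with hSdef
  have hsup : ∀ l ∈ Finset.Icc 1 N_R, (l : ℝ) * x ^ l / ((min l N_T : ℕ):ℝ) ≤ S :=
    fun l hl => by exact Finset.le_sup' (fun (l:ℕ) => (l : ℝ) * x ^ l / ((min l N_T : ℕ):ℝ)) hl
  clear_value S
  -- from l = 1 :
  have h1 : x ≤ S := by
    have h := hsup 1 (by simp [Finset.mem_Icc]; omega)
    have hm : min 1 N_T = 1 := min_eq_left (by omega)
    simpa [hm] using h
  have hS0 : 0 ≤ S := le_trans hx0 h1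
  -- Bernoulli
  have bern : ∀ n : ℕ, 1 - (n:ℝ) * μR ≤ x ^ n := by
    intro n
    have := one_add_mul_le_pow (show (-2:ℝ) ≤ -μR by linarith) n
    calc 1 - (n:ℝ) * μR = 1 + (n:ℝ) * (-μR) := by ring
    _ ≤ (1 + -μR) ^ n := this
    _ = x ^ n := by rw [hxdef]; ring_nf
  have hxp0 : 0 ≤ x ^ N_R := pow_nonneg hx0 N_R
  have hxp1 : x ^ N_R ≤ 1 := pow_le_one₀ hx0 hx1
  -- term1 ≤ S
  have hterm1 : (((N_T : ℝ) - 1) / N_T) * x ≤ S := by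
    refine le_trans ?_ h1
    have hc : ((N_T : ℝ) - 1) / N_T ≤ 1 := by
      rw [div_le_one hNT0]; linarith
    nlinarith
  -- term2 ≤ 8 S
  have hterm2 : (x / (N_T * μR)) * (1 - x ^ N_R) ≤ 8 * S := by
    rcases le_or_gt (1/2 : ℝ) ((N_T:ℝ) * μR) with hc1 | hc1
    · -- easy case
      have : (x / (N_T * μR)) * (1 - x ^ N_R) ≤ x / (N_T * μR) := by
        nlinarith [div_nonneg hx0 hA.le]
      have h2 : x / (N_T * μR) ≤ 2 * x := by
        rw [div_le_iff₀ hA]; nlinarith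
      linarith
    · rcases le_or_gt ((N_R:ℝ) * μR) (1/2 : ℝ) with hc2 | hc2
      · -- l = N_R
        have hb := bern N_R
        have hhalf : (1:ℝ)/2 ≤ x ^ N_R := by linarith
        have hfNR : (N_R : ℝ) * x ^ N_R / ((N_T:ℕ):ℝ) ≤ S := by
          have h := hsup N_R (by simp [Finset.mem_Icc]; omega)
          rwa [min_eq_right hTN] at h
        have step1 : (x / (N_T * μR)) * (1 - x ^ N_R) ≤ (x / (N_T * μR)) * ((N_R:ℝ) * μR) := by
          have : 1 - x ^ N_R ≤ (N_R:ℝ) * μR := by linarith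
          exact mul_le_mul_of_nonneg_left this (div_nonneg hx0 hA.le)
        have step2 : (x / (N_T * μR)) * ((N_R:ℝ) * μR) = x * (N_R:ℝ) / (N_T:ℝ) := by
          field_simp
        have step3 : x * (N_R:ℝ) / (N_T:ℝ) ≤ (N_R:ℝ) / (N_T:ℝ) := by
          gcongr; nlinarith
        have step4 : (N_R:ℝ) / (N_T:ℝ) ≤ 2 * ((N_R : ℝ) * x ^ N_R / (N_T:ℝ)) := by
          rw [← mul_div_assoc]
          gcongr
          nlinarith
        calc (x / (N_T * μR)) * (1 - x ^ N_R) ≤ x * (N_R:ℝ) / (N_T:ℝ) := by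
              rw [← step2]; exact step1
          _ ≤ 2 * ((N_R : ℝ) * x ^ N_R / (N_T:ℝ)) := le_trans step3 step4
          _ ≤ 8 * S := by push_cast at hfNR; nlinarith
      · -- l = floor (1/(2μ))
        obtain ⟨l, hldef⟩ : ∃ l : ℕ, l = ⌊1/(2*μR)⌋₊ := ⟨_, rfl⟩
        have h2μ : (0:ℝ) < 2*μR := by linarith
        have hNTl : (N_T:ℝ) ≤ 1/(2*μR) := by
          rw [le_div_iff₀ h2μ]; nlinarith
        have hl1 : N_T ≤ l := by rw [hldef]; exact Nat.le_floor hNTl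
        have hlle : (l:ℝ) ≤ 1/(2*μR) := by rw [hldef]; exact Nat.floor_le (by positivity)
        have hlNR : (1:ℝ)/(2*μR) < (N_R:ℝ) := by
          rw [div_lt_iff₀ h2μ]; nlinarith
        have hl2 : l ≤ N_R := by
          have : (l:ℝ) < (N_R:ℝ) := lt_of_le_of_lt hlle hlNR
          exact_mod_cast this.le
        have hμ4 : μR < 1/4 := by nlinarith [show (2:ℝ) ≤ (N_T:ℝ) by exact_mod_cast hNT]
        have hlf : (1:ℝ)/(2*μR) < (l:ℝ) + 1 := by rw [hldef]; exact Nat.lt_floor_add_one _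
        have h14 : (1:ℝ) ≤ 1/(4*μR) := by
          rw [le_div_iff₀ (by linarith : (0:ℝ) < 4*μR)]; linarith
        have hsplit : (1:ℝ)/(2*μR) = 1/(4*μR) + 1/(4*μR) := by
          field_simp; ring
        have hll : 1/(4*μR) ≤ (l:ℝ) := by linarith
        have hlμ : (l:ℝ) * μR ≤ 1/2 := by
          have := (le_div_iff₀ h2μ).mp hlle
          nlinarith
        have hb := bern l
        have hhalf : (1:ℝ)/2 ≤ x ^ l := by linarith
        have hfl : (l : ℝ) * x ^ l / ((N_T:ℕ):ℝ) ≤ S := by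
          have h := hsup l (by simp [Finset.mem_Icc]; omega)
          rwa [min_eq_right hl1] at h
        have hkey : 1/(8 * ((N_T:ℝ) * μR)) ≤ (l : ℝ) * x ^ l / (N_T:ℝ) := by
          rw [div_le_div_iff₀ (by positivity) hNT0]
          have hl0 : (0:ℝ) ≤ (l:ℝ) := Nat.cast_nonneg l
          have : 1/(8*μR) ≤ (l:ℝ) * x ^ l := by
            calc 1/(8*μR) = (1/(4*μR)) * (1/2) := by field_simp; ring
              _ ≤ (l:ℝ) * x ^ l := by
                  apply mul_le_mul hll hhalf (by norm_num) hl0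
          have h8 : 1/(8*μR)*(8*μR) = 1 := by field_simp
          nlinarith [mul_le_mul_of_nonneg_right this (by positivity : (0:ℝ) ≤ 8*μR), hNT0.le]
        have step1 : (x / (N_T * μR)) * (1 - x ^ N_R) ≤ 1 / ((N_T:ℝ) * μR) := by
          have h1' : (x / (N_T * μR)) * (1 - x ^ N_R) ≤ x / (N_T * μR) := by
            nlinarith [div_nonneg hx0 hA.le]
          have h2' : x / ((N_T:ℝ) * μR) ≤ 1 / ((N_T:ℝ) * μR) := by gcongr
          linarith
        have step2 : 1 / ((N_T:ℝ) * μR) = 8 * (1/(8 * ((N_T:ℝ) * μR))) := by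
          field_simp
        calc (x / (N_T * μR)) * (1 - x ^ N_R) ≤ 8 * (1/(8 * ((N_T:ℝ) * μR))) := by
              rw [← step2]; exact step1
          _ ≤ 8 * ((l : ℝ) * x ^ l / (N_T:ℝ)) := by linarith
          _ ≤ 8 * S := by push_cast at hfl; linarith
  linarith
end

section
/- Let N_T and N_R be integers with 2 ≤ N_T ≤ N_R and let μ_R be a real with 0 < μ_R < 1/(4N_R). Then ((N_T-1)/N_T)·(1-μ_R) + ((1-μ_R)/(N_T μ_R))·(1 - (1-μ_R)^{N_R}) < (7/3) · max_{l ∈ {1,...,N_R}} [ l·(1-μ_R)^l / min{l, N_T} ]. -/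
theorem access_gap_small_mu (N_T N_R : ℕ) (hNT : 2 ≤ N_T) (hTN : N_T ≤ N_R)
    (μR : ℝ) (hμ0 : 0 < μR) (hμ : μR < 1 / (4 * (N_R : ℝ))) :
    (((N_T : ℝ) - 1) / N_T) * (1 - μR)
        + ((1 - μR) / (N_T * μR)) * (1 - (1 - μR) ^ N_R)
      < (7 / 3) * (Finset.Icc 1 N_R).sup'
          (Finset.nonempty_Icc.mpr (le_trans (le_trans (by norm_num) hNT) hTN))
          (fun l => (l : ℝ) * (1 - μR) ^ l / (min l N_T : ℕ)) := by
  have hNT2 : (2:ℝ) ≤ (N_T:ℝ) := by exact_mod_cast hNT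
  have hNT0 : (0:ℝ) < N_T := by linarith
  have hNR2 : (2:ℕ) ≤ N_R := le_trans hNT hTN
  have hNR2R : (2:ℝ) ≤ (N_R:ℝ) := by exact_mod_cast hNR2
  have hNR0 : (0:ℝ) < N_R := by linarith
  have hNRμ : (N_R:ℝ) * μR < 1/4 := by
    rw [lt_div_iff₀ (by positivity)] at hμ
    linarith
  have hμ1 : μR < 1 := by nlinarith [mul_le_mul_of_nonneg_right hNR2R hμ0.le]
  have hpow : 1 - (N_R:ℝ) * μR ≤ (1 - μR) ^ N_R := by
    have := one_add_mul_le_pow (a := -μR) (by linarith) N_R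
    calc 1 - (N_R:ℝ) * μR = 1 + N_R * (-μR) := by ring
      _ ≤ (1 + -μR) ^ N_R := this
      _ = (1 - μR) ^ N_R := by ring_nf
  have hpowgt : (3/4:ℝ) < (1 - μR) ^ N_R := by linarith
  set f : ℕ → ℝ := fun l => (l : ℝ) * (1 - μR) ^ l / (min l N_T : ℕ) with hf
  set S := (Finset.Icc 1 N_R).sup'
      (Finset.nonempty_Icc.mpr (le_trans (le_trans (by norm_num) hNT) hTN)) f with hS
  have h1mem : 1 ∈ Finset.Icc 1 N_R := Finset.mem_Icc.mpr ⟨le_refl 1, by omega⟩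
  have hNmem : N_R ∈ Finset.Icc 1 N_R := Finset.mem_Icc.mpr ⟨by omega, le_refl _⟩
  have hS1 : 1 - μR ≤ S := by
    have h := Finset.le_sup' f h1mem
    have heq : f 1 = 1 - μR := by
      show (1:ℕ) * (1 - μR) ^ 1 / ((min 1 N_T : ℕ):ℝ) = 1 - μR
      rw [min_eq_left (by omega : 1 ≤ N_T)]
      norm_num
    rwa [heq] at h
  have hSN : (N_R:ℝ) * (1 - μR) ^ N_R / N_T ≤ S := by
    have h := Finset.le_sup' f hNmem
    have heq : f N_R = (N_R:ℝ) * (1 - μR) ^ N_R / N_T := by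
      show (N_R:ℝ) * (1 - μR) ^ N_R / ((min N_R N_T : ℕ):ℝ) = _
      rw [min_eq_right hTN]
    rwa [heq] at h
  have hT2 : (1 - μR) / (N_T * μR) * (1 - (1 - μR) ^ N_R) ≤ (1 - μR) * N_R / N_T := by
    rw [div_mul_eq_mul_div, div_le_div_iff₀ (by positivity) hNT0]
    have h1 : 1 - (1 - μR) ^ N_R ≤ N_R * μR := by linarith
    nlinarith [mul_le_mul_of_nonneg_right
      (mul_le_mul_of_nonneg_left h1 (by linarith : (0:ℝ) ≤ 1 - μR)) hNT0.le]
  have hT1 : ((N_T:ℝ) - 1) / N_T * (1 - μR) < S := by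
    have : ((N_T:ℝ) - 1) / N_T * (1 - μR) < 1 * (1 - μR) := by
      apply mul_lt_mul_of_pos_right _ (by linarith)
      rw [div_lt_one hNT0]; linarith
    linarith
  have hT3 : (1 - μR) * N_R / N_T < (4/3) * S := by
    have key : (1 - μR) * N_R < (4/3) * (N_R * (1 - μR) ^ N_R) := by
      nlinarith [mul_lt_mul_of_pos_left
        (show 1 - μR < (4/3) * (1 - μR) ^ N_R by linarith) hNR0]
    have h2 : (1 - μR) * N_R / N_T < (4/3) * (N_R * (1 - μR) ^ N_R) / N_T :=
      (div_lt_div_iff_of_pos_right hNT0).mpr key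
    have h3 : (4/3) * (N_R * (1 - μR) ^ N_R) / N_T
        = (4/3) * ((N_R:ℝ) * (1 - μR) ^ N_R / N_T) := by ring
    linarith [h2, h3 ▸ h2]
  linarith
end

section
/- Let N_T and N_R be integers with 2 ≤ N_T ≤ N_R and let μ_R be a real with 1/(4N_R) ≤ μ_R < 1/(4N_T). Then ((N_T-1)/N_T)·(1-μ_R) + ((1-μ_R)/(N_T μ_R))·(1 - (1-μ_R)^{N_R}) < (37/5) · max_{l ∈ {1,...,N_R}} [ l·(1-μ_R)^l / min{l, N_T} ]. -/
set_option maxHeartbeats 1000000 in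
theorem access_gap_mid_mu (N_T N_R : ℕ) (hNT : 2 ≤ N_T) (hTN : N_T ≤ N_R)
    (μR : ℝ) (hμlo : 1 / (4 * (N_R : ℝ)) ≤ μR) (hμhi : μR < 1 / (4 * (N_T : ℝ))) :
    (((N_T : ℝ) - 1) / N_T) * (1 - μR)
        + ((1 - μR) / (N_T * μR)) * (1 - (1 - μR) ^ N_R)
      < (37 / 5) * (Finset.Icc 1 N_R).sup'
          (Finset.nonempty_Icc.mpr (le_trans (le_trans (by norm_num) hNT) hTN))
          (fun l => (l : ℝ) * (1 - μR) ^ l / (min l N_T : ℕ)) := by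
  have hNT2 : (2:ℝ) ≤ (N_T:ℝ) := by exact_mod_cast hNT
  have hNTpos : (0:ℝ) < N_T := by linarith
  have hTNr : (N_T:ℝ) ≤ (N_R:ℝ) := by exact_mod_cast hTN
  have hNRpos : (0:ℝ) < N_R := by linarith
  have hμpos : 0 < μR := lt_of_lt_of_le (by positivity) hμlo
  have hμ8 : μR < 1/8 := by
    have h : 1 / (4*(N_T:ℝ)) ≤ 1/8 := by
      rw [div_le_div_iff₀ (by positivity) (by norm_num)]; linarith
    linarith
  have h1μ : (0:ℝ) < 1 - μR := by linarith
  have hμhi' : μR * (4*(N_T:ℝ)) < 1 := by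
    rw [← lt_div_iff₀ (by positivity)]; exact hμhi
  have hμlo' : 1 ≤ μR * (4*(N_R:ℝ)) := by
    rw [← div_le_iff₀ (by positivity)]; exact hμlo
  have hNTlt : (N_T:ℝ) < 1/(4*μR) := by
    rw [lt_div_iff₀ (by positivity)]; nlinarith
  have hle : 1/(4*μR) ≤ (N_R:ℝ) := by
    rw [div_le_iff₀ (by positivity)]; nlinarith
  set l : ℕ := ⌈1/(4*μR)⌉₊ with hl
  have hl1 : 1 ≤ l := Nat.one_le_ceil_iff.mpr (by positivity)
  have hlN : l ≤ N_R := Nat.ceil_le.mpr hle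
  have hlx : 1/(4*μR) ≤ (l:ℝ) := Nat.le_ceil _
  have hNTl : N_T ≤ l := by
    have h : (N_T:ℝ) < (l:ℝ) := lt_of_lt_of_le hNTlt hlx
    exact_mod_cast h.le
  have hlup : (l:ℝ) < 1/(4*μR) + 1 := Nat.ceil_lt_add_one (by positivity)
  have hlμ : (l:ℝ)*μR ≤ 3/8 := by
    have h1 : (l:ℝ)*μR < (1/(4*μR) + 1)*μR := mul_lt_mul_of_pos_right hlup hμpos
    have h2 : (1/(4*μR) + 1)*μR = 1/4 + μR := by field_simp
    nlinarith
  have hBern : (5:ℝ)/8 ≤ (1-μR)^l := by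
    have h1 : 1 + (l:ℝ)*(-μR) ≤ (1 + (-μR))^l := one_add_mul_le_pow (by linarith) l
    have h2 : (1:ℝ) + (-μR) = 1 - μR := by ring
    rw [h2] at h1
    nlinarith
  have hkey : (5:ℝ) ≤ (l:ℝ)*(1-μR)^l * (32*μR) := by
    have hk : 5/(32*μR) ≤ (l:ℝ)*(1-μR)^l := by
      calc 5/(32*μR) = (1/(4*μR))*(5/8) := by field_simp; ring
      _ ≤ (l:ℝ)*((1-μR)^l) :=
          mul_le_mul hlx hBern (by norm_num) (le_trans (by positivity) hlx)
    rw [div_le_iff₀ (by positivity)] at hk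
    exact hk
  set f : ℕ → ℝ := fun l => (l : ℝ) * (1 - μR) ^ l / (min l N_T : ℕ) with hf
  set ne1 := Finset.nonempty_Icc.mpr (le_trans (le_trans (by norm_num : (1:ℕ) ≤ 2) hNT) hTN)
  set S := (Finset.Icc 1 N_R).sup' ne1 f with hS
  have hS1 : 1 - μR ≤ S := by
    have hm : (1:ℕ) ∈ Finset.Icc 1 N_R := Finset.mem_Icc.mpr ⟨le_refl 1, by omega⟩
    have h : f 1 ≤ S := Finset.le_sup' f hm
    have hmin : min 1 N_T = 1 := by omega
    have hval : f 1 = 1 - μR := by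
      simp only [hf]
      rw [hmin]
      norm_num
    rwa [hval] at h
  have hS2 : 5/(32*(N_T:ℝ)*μR) ≤ S := by
    have hm : l ∈ Finset.Icc 1 N_R := Finset.mem_Icc.mpr ⟨hl1, hlN⟩
    have h : f l ≤ S := Finset.le_sup' f hm
    have hmin : min l N_T = N_T := by omega
    have hval : f l = (l:ℝ) * (1-μR)^l / (N_T:ℝ) := by
      simp only [hf]
      rw [hmin]
    rw [hval] at h
    refine le_trans ?_ h
    rw [div_le_div_iff₀ (by positivity) hNTpos]
    nlinarith
  clear_value S
  clear hS
  clear hf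
  clear f
  clear ne1
  clear_value l
  clear hl
  have hpowpos : (0:ℝ) < (1-μR)^N_R := pow_pos h1μ N_R
  have hA : (((N_T : ℝ) - 1) / N_T) * (1 - μR) < S := by
    have h1 : ((N_T : ℝ) - 1) / N_T < 1 := by
      rw [div_lt_one hNTpos]; linarith
    nlinarith [mul_lt_mul_of_pos_right h1 h1μ]
  have hB : ((1 - μR) / (N_T * μR)) * (1 - (1 - μR) ^ N_R) < (32/5) * S := by
    have hc : (0:ℝ) < (1 - μR) / (N_T * μR) := div_pos h1μ (by positivity)
    have h1 : ((1 - μR) / (N_T * μR)) * (1 - (1 - μR) ^ N_R) < (1 - μR) / (N_T * μR) := by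
      nlinarith [mul_pos hc hpowpos]
    have h2 : (1 - μR) / (N_T * μR) < 1 / (N_T * μR) := by
      rw [div_lt_div_iff₀ (by positivity) (by positivity)]
      nlinarith [mul_pos hNTpos hμpos]
    have h3 : 1 / ((N_T:ℝ) * μR) = (32/5) * (5/(32*(N_T:ℝ)*μR)) := by
      field_simp
    calc ((1 - μR) / (N_T * μR)) * (1 - (1 - μR) ^ N_R)
        < (1 - μR) / (N_T * μR) := h1
      _ < 1 / (N_T * μR) := h2
      _ = (32/5) * (5/(32*(N_T:ℝ)*μR)) := h3
      _ ≤ (32/5) * S := by linarith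
  calc (((N_T : ℝ) - 1) / N_T) * (1 - μR)
        + ((1 - μR) / (N_T * μR)) * (1 - (1 - μR) ^ N_R)
      < S + (32/5) * S := by linarith
    _ = (37/5) * S := by ring
end

section
/- Let N_T and N_R be integers with 2 ≤ N_T ≤ N_R and let μ_R be a real with 1/(4N_T) ≤ μ_R < 1. Then ((N_T-1)/N_T)·(1-μ_R) + ((1-μ_R)/(N_T μ_R))·(1 - (1-μ_R)^{N_R}) < (19/3) · max_{l ∈ {1,...,N_R}} [ l·(1-μ_R)^l / min{l, N_T} ]. -/
theorem access_gap_large_mu (N_T N_R : ℕ) (hNT : 2 ≤ N_T) (hTN : N_T ≤ N_R)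
    (μR : ℝ) (hμlo : 1 / (4 * (N_T : ℝ)) ≤ μR) (hμhi : μR < 1) :
    (((N_T : ℝ) - 1) / N_T) * (1 - μR)
        + ((1 - μR) / (N_T * μR)) * (1 - (1 - μR) ^ N_R)
      < (19 / 3) * (Finset.Icc 1 N_R).sup'
          (Finset.nonempty_Icc.mpr (le_trans (le_trans (by norm_num) hNT) hTN))
          (fun l => (l : ℝ) * (1 - μR) ^ l / (min l N_T : ℕ)) := by
  have hNT0 : (0:ℝ) < N_T := by
    have : (2:ℝ) ≤ (N_T:ℝ) := by exact_mod_cast hNT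
    linarith
  have hμ0 : 0 < μR := lt_of_lt_of_le (by positivity) hμlo
  have h1μ : 0 < 1 - μR := by linarith
  have hq : (1:ℝ)/4 ≤ (N_T:ℝ) * μR := by
    have h := mul_le_mul_of_nonneg_left hμlo (le_of_lt hNT0)
    have heq : (N_T:ℝ) * (1/(4*(N_T:ℝ))) = 1/4 := by field_simp
    linarith [heq ▸ h]
  have hden : 0 < (N_T:ℝ) * μR := by positivity
  have hpow0 : (0:ℝ) ≤ (1-μR)^N_R := by positivity
  have hpow1 : (1-μR)^N_R ≤ 1 := pow_le_one₀ (by linarith) (by linarith)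
  -- term 1 bound
  have ht1 : (((N_T : ℝ) - 1) / N_T) * (1 - μR) < 1 - μR := by
    have : ((N_T:ℝ) - 1) / N_T < 1 := by
      rw [div_lt_one hNT0]; linarith
    nlinarith
  -- term 2 bound
  have ht2 : ((1 - μR) / (N_T * μR)) * (1 - (1 - μR) ^ N_R) ≤ 4 * (1 - μR) := by
    have hdiv : (1 - μR) / ((N_T:ℝ) * μR) ≤ 4 * (1 - μR) := by
      rw [div_le_iff₀ hden]; nlinarith
    have hnn : (0:ℝ) ≤ (1 - μR) / ((N_T:ℝ) * μR) := by positivity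
    calc ((1 - μR) / (N_T * μR)) * (1 - (1 - μR) ^ N_R)
        ≤ ((1 - μR) / ((N_T:ℝ) * μR)) * 1 :=
          mul_le_mul_of_nonneg_left (by linarith) hnn
      _ = (1 - μR) / ((N_T:ℝ) * μR) := by ring
      _ ≤ 4 * (1 - μR) := hdiv
  -- sup bound
  have hmem : 1 ∈ Finset.Icc 1 N_R := Finset.mem_Icc.mpr ⟨le_rfl, le_trans (le_trans (by norm_num) hNT) hTN⟩
  have hsup := Finset.le_sup' (f := fun l => (l : ℝ) * (1 - μR) ^ l / (min l N_T : ℕ))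
    (s := Finset.Icc 1 N_R) hmem
  have hf1 : ((1:ℕ) : ℝ) * (1 - μR) ^ (1:ℕ) / ((min 1 N_T : ℕ) : ℝ) = 1 - μR := by
    have hm : min 1 N_T = 1 := min_eq_left (by omega)
    rw [hm]; norm_num
  simp only [hf1] at hsup
  have h193 : (19:ℝ)/3 * (1 - μR) ≤ (19/3) * (Finset.Icc 1 N_R).sup'
      (Finset.nonempty_Icc.mpr (le_trans (le_trans (by norm_num) hNT) hTN))
      (fun l => (l : ℝ) * (1 - μR) ^ l / (min l N_T : ℕ)) := by
    apply mul_le_mul_of_nonneg_left hsup (by norm_num)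
  linarith
end

section
/- Let N_T and N_R be integers with N_T ≥ N_R ≥ 2, and let μ_R, μ_T, r be reals with 0 < μ_R ≤ 1, 0 ≤ μ_T ≤ 1 and r > 0. Then 2·(1-μ_R) + ((1-μ_T)^{N_T}/r)·((1-μ_R)/μ_R)·(1 - (1-μ_R)^{N_R}) ≤ 12 · [ max_{l ∈ {1,...,N_R}} ( l·(1-μ_T)^{N_T}·(1-μ_R)^{l} / r ) + (1-μ_R) ]. -/
private lemma aux_pow_ge (x : ℝ) (hx : 1/2 ≤ x) (hx1 : x ≤ 1) (k : ℕ)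
    (hk : (k : ℝ) * (1 - x) ≤ 1) : (1 : ℝ)/8 ≤ x ^ k := by
  have hx0 : 0 < x := by linarith
  have h1 : (1/x) ^ k ≤ 8 := by
    have hnn : 0 ≤ (1 - x)/x := div_nonneg (by linarith) (le_of_lt hx0)
    have h2 : 1/x = 1 + (1 - x)/x := by field_simp; ring
    have h3 : 1 + (1 - x)/x ≤ Real.exp ((1 - x)/x) := by
      have := Real.add_one_le_exp ((1 - x)/x); linarith
    have h4 : (1/x) ^ k ≤ Real.exp ((1 - x)/x) ^ k := by
      rw [h2]; exact pow_le_pow_left₀ (by linarith) h3 k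
    have h5 : Real.exp ((1 - x)/x) ^ k = Real.exp (k * ((1 - x)/x)) := by
      rw [← Real.exp_nat_mul]
    have h6 : (k : ℝ) * ((1 - x)/x) ≤ 2 := by
      have hinv : 1/x ≤ 2 := by rw [div_le_iff₀ hx0]; linarith
      have hknn : (0 : ℝ) ≤ k := Nat.cast_nonneg k
      have : (k : ℝ) * ((1 - x)/x) = ((k : ℝ) * (1 - x)) * (1/x) := by ring
      rw [this]
      have hnn2 : (0 : ℝ) ≤ (k : ℝ) * (1 - x) := mul_nonneg (Nat.cast_nonneg k) (by linarith)
      calc (k : ℝ) * (1 - x) * (1/x) ≤ 1 * (1/x) := by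
            apply mul_le_mul_of_nonneg_right hk (by positivity)
        _ ≤ 1 * 2 := by nlinarith
        _ = 2 := by norm_num
    have h7 : Real.exp ((k : ℝ) * ((1 - x)/x)) ≤ Real.exp 2 := Real.exp_le_exp.mpr h6
    have h8 : Real.exp 2 < 8 := by
      have he := Real.exp_one_lt_d9
      have : Real.exp 2 = Real.exp 1 * Real.exp 1 := by
        rw [← Real.exp_add]; norm_num
      nlinarith [Real.exp_pos 1]
    calc (1/x) ^ k ≤ Real.exp (k * ((1 - x)/x)) := h5 ▸ h4
      _ ≤ Real.exp 2 := h7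
      _ ≤ 8 := le_of_lt h8
  have hxk : 0 < x ^ k := pow_pos hx0 k
  have : 1 / x ^ k ≤ 8 := by rwa [one_div_pow] at h1
  rw [div_le_iff₀ hxk] at this
  linarith

private lemma key_sum_bound (x : ℝ) (hx0 : 0 ≤ x) (hx1 : x < 1) (N : ℕ) (hN : 1 ≤ N) :
    ∃ l ∈ Finset.Icc 1 N, (x / (1 - x)) * (1 - x ^ N) ≤ 8 * ((l : ℝ) * x ^ l) := by
  have hu : 0 < 1 - x := by linarith
  have hxN0 : 0 ≤ x ^ N := pow_nonneg hx0 N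
  have hxN1 : x ^ N ≤ 1 := pow_le_one₀ hx0 (le_of_lt hx1)
  by_cases hhalf : x ≤ 1/2
  · -- take l = 1
    refine ⟨1, Finset.mem_Icc.mpr ⟨le_refl 1, hN⟩, ?_⟩
    have h1 : x / (1 - x) ≤ 2 * x := by
      rw [div_le_iff₀ hu]; nlinarith
    have h2 : (x / (1 - x)) * (1 - x ^ N) ≤ x / (1 - x) * 1 := by
      apply mul_le_mul_of_nonneg_left (by linarith) (by positivity)
    simp only [Nat.cast_one, one_mul, pow_one]
    nlinarith
  · push_neg at hhalf
    have hx2 : 1/2 ≤ x := le_of_lt hhalf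
    by_cases hcase : (N : ℝ) * (1 - x) ≤ 1
    · -- take l = N
      refine ⟨N, Finset.mem_Icc.mpr ⟨hN, le_refl N⟩, ?_⟩
      have hbern : 1 + (N : ℝ) * (x - 1) ≤ x ^ N := by
        have h := one_add_mul_le_pow (a := x - 1) (by linarith) N
        have he : (1 : ℝ) + (x - 1) = x := by ring
        rw [he] at h
        exact h
      have h1 : 1 - x ^ N ≤ (N : ℝ) * (1 - x) := by nlinarith
      have h2 : (x / (1 - x)) * (1 - x ^ N) ≤ (x / (1 - x)) * ((N : ℝ) * (1 - x)) := by
        apply mul_le_mul_of_nonneg_left h1 (by positivity)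
      have h3 : (x / (1 - x)) * ((N : ℝ) * (1 - x)) = (N : ℝ) * x := by
        field_simp
      have hpow : (1 : ℝ)/8 ≤ x ^ N := aux_pow_ge x hx2 (le_of_lt hx1) N hcase
      have hNnn : (0 : ℝ) ≤ N := Nat.cast_nonneg N
      nlinarith
    · -- take l = ⌈1/(1-x)⌉₊
      push_neg at hcase
      set m := ⌈1/(1 - x)⌉₊ with hm
      have hinv1 : (1 : ℝ) ≤ 1/(1 - x) := by
        rw [le_div_iff₀ hu]; linarith
      have hmN : m ≤ N := by
        apply Nat.ceil_le.mpr
        rw [div_le_iff₀ hu]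
        nlinarith
      have hm1 : 1 ≤ m := by
        exact_mod_cast Nat.one_le_ceil_iff.mpr (by linarith)
      refine ⟨m, Finset.mem_Icc.mpr ⟨hm1, hmN⟩, ?_⟩
      have hmge : 1/(1 - x) ≤ (m : ℝ) := Nat.le_ceil _
      have hmlt : (m : ℝ) < 1/(1 - x) + 1 := by
        exact_mod_cast Nat.ceil_lt_add_one (by positivity)
      -- k = m - 1
      have hk : (↑(m - 1) : ℝ) * (1 - x) ≤ 1 := by
        have : (↑(m - 1) : ℝ) = (m : ℝ) - 1 := by
          have : (1 : ℕ) ≤ m := hm1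
          push_cast [Nat.cast_sub this]; ring
        rw [this]
        have h' : (m : ℝ) - 1 < 1/(1 - x) := by linarith
        have := mul_le_mul_of_nonneg_right (le_of_lt h') (le_of_lt hu)
        calc ((m : ℝ) - 1) * (1 - x) ≤ (1/(1 - x)) * (1 - x) := this
          _ = 1 := by field_simp
      have hpow : (1 : ℝ)/8 ≤ x ^ (m - 1) := aux_pow_ge x hx2 (le_of_lt hx1) (m - 1) hk
      have hxm : x ^ m = x ^ (m - 1) * x := by
        rw [← pow_succ]
        congr 1
        omega
      have h1 : (x / (1 - x)) * (1 - x ^ N) ≤ x / (1 - x) := by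
        have := mul_le_mul_of_nonneg_left (show 1 - x ^ N ≤ 1 by linarith)
          (show 0 ≤ x / (1 - x) by positivity)
        linarith
      have h2 : x / (1 - x) ≤ 8 * ((m : ℝ) * x ^ m) := by
        rw [hxm]
        have hstep : (1/(1 - x)) * (x/8) ≤ (m : ℝ) * (x ^ (m - 1) * x) := by
          apply mul_le_mul hmge ?_ (by positivity) (Nat.cast_nonneg m)
          · nlinarith
        calc x / (1 - x) = 8 * ((1/(1 - x)) * (x/8)) := by field_simp
          _ ≤ 8 * ((m : ℝ) * (x ^ (m - 1) * x)) := by linarith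
      linarith

theorem ndt_gap_le_twelve_NT_ge_NR (N_T N_R : ℕ) (hNR : 2 ≤ N_R) (hTN : N_R ≤ N_T)
    (μR μT r : ℝ) (hμR0 : 0 < μR) (hμR1 : μR ≤ 1)
    (hμT0 : 0 ≤ μT) (hμT1 : μT ≤ 1) (hr : 0 < r) :
    2 * (1 - μR)
        + ((1 - μT) ^ N_T / r) * ((1 - μR) / μR) * (1 - (1 - μR) ^ N_R)
      ≤ 12 * ((Finset.Icc 1 N_R).sup'
            (Finset.nonempty_Icc.mpr (le_trans (by norm_num) hNR))
            (fun l => (l : ℝ) * (1 - μT) ^ N_T * (1 - μR) ^ l / r)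
          + (1 - μR)) := by
  set x := 1 - μR with hxdef
  have hx0 : 0 ≤ x := by simp [hxdef]; linarith
  have hx1 : x < 1 := by simp [hxdef]; linarith
  have hN1 : 1 ≤ N_R := le_trans (by norm_num) hNR
  obtain ⟨l0, hl0mem, hl0⟩ := key_sum_bound x hx0 hx1 N_R hN1
  set f : ℕ → ℝ := fun l => (l : ℝ) * (1 - μT) ^ N_T * (1 - μR) ^ l / r with hf
  set S := (Finset.Icc 1 N_R).sup'
      (Finset.nonempty_Icc.mpr (le_trans (by norm_num) hNR)) f with hS
  have hsup : f l0 ≤ S := Finset.le_sup' f hl0mem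
  have ha : 0 ≤ (1 - μT) ^ N_T := pow_nonneg (by linarith) N_T
  have hf0 : 0 ≤ f l0 := by
    have : (1 - μR) ^ l0 = x ^ l0 := by rw [hxdef]
    apply div_nonneg _ (le_of_lt hr)
    apply mul_nonneg (mul_nonneg (Nat.cast_nonneg l0) ha)
    rw [this]; exact pow_nonneg hx0 l0
  have hS0 : 0 ≤ S := le_trans hf0 hsup
  -- bound the middle term
  have hc : 0 ≤ (1 - μT) ^ N_T / r := by positivity
  have hμeq : (1 - μR) / μR = x / (1 - x) := by rw [hxdef]; ring_nf
  have hmid : ((1 - μT) ^ N_T / r) * ((1 - μR) / μR) * (1 - (1 - μR) ^ N_R)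
      ≤ 8 * f l0 := by
    have h1 : ((1 - μT) ^ N_T / r) * ((1 - μR) / μR) * (1 - (1 - μR) ^ N_R)
        = ((1 - μT) ^ N_T / r) * ((x / (1 - x)) * (1 - x ^ N_R)) := by
      rw [hμeq, hxdef]; ring
    rw [h1]
    have h2 : ((1 - μT) ^ N_T / r) * ((x / (1 - x)) * (1 - x ^ N_R))
        ≤ ((1 - μT) ^ N_T / r) * (8 * ((l0 : ℝ) * x ^ l0)) :=
      mul_le_mul_of_nonneg_left hl0 hc
    have h3 : ((1 - μT) ^ N_T / r) * (8 * ((l0 : ℝ) * x ^ l0)) = 8 * f l0 := by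
      rw [hf]
      simp only [hxdef]
      field_simp
    linarith
  have h8 : 8 * f l0 ≤ 8 * S := by linarith
  linarith
end

section
/- Let N_T and N_R be integers with 2 ≤ N_T < N_R, and let μ_R, μ_T, r be reals with 0 < μ_R ≤ 1, 0 ≤ μ_T ≤ 1 and r > 0. Then ((N_T-1)/N_T)·(1-μ_R) + ((1-μ_R)/(N_T μ_R))·(1 - (1-μ_R)^{N_R}) + ((1-μ_T)^{N_T}/r)·((1-μ_R)/μ_R)·(1 - (1-μ_R)^{N_R}) ≤ 12 · [ max_{l₁ ∈ {1,...,N_R}} ( l₁·(1-μ_T)^{N_T}·(1-μ_R)^{l₁} / r ) + max_{l₂ ∈ {1,...,N_R}} ( l₂·(1-μ_R)^{l₂} / min{l₂, N_T} ) ]. -/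
lemma key_geom_le (μ : ℝ) (hμ0 : 0 < μ) (hμ1 : μ ≤ 1) (N : ℕ) (hN : 1 ≤ N) :
    ∃ l ∈ Finset.Icc 1 N,
      ((1 - μ) / μ) * (1 - (1 - μ) ^ N) ≤ 8 * ((l : ℝ) * (1 - μ) ^ l) := by
  set x : ℝ := 1 - μ with hxdef
  have hx0 : 0 ≤ x := by simp [hxdef]; linarith
  have hx1 : x ≤ 1 := by simp [hxdef]; linarith
  have hxN0 : 0 ≤ x ^ N := pow_nonneg hx0 N
  have hxN1 : x ^ N ≤ 1 := pow_le_one₀ hx0 hx1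
  have hGle : (x / μ) * (1 - x ^ N) ≤ x / μ := by
    nlinarith [div_nonneg hx0 hμ0.le]
  by_cases hA : 1/4 ≤ μ
  · refine ⟨1, Finset.mem_Icc.mpr ⟨le_rfl, hN⟩, ?_⟩
    have h4 : x / μ ≤ 4 * x := by
      rw [div_le_iff₀ hμ0]; nlinarith
    have : ((1:ℕ) : ℝ) * x ^ 1 = x := by norm_num
    rw [this]
    calc (x/μ) * (1 - x^N) ≤ x/μ := hGle
      _ ≤ 4*x := h4
      _ ≤ 8 * x := by linarith
  · push_neg at hA
    by_cases hB : (N:ℝ) * μ ≤ 1/2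
    · refine ⟨N, Finset.mem_Icc.mpr ⟨hN, le_rfl⟩, ?_⟩
      have hber : 1 - (N:ℝ)*μ ≤ x ^ N := by
        have h := one_add_mul_le_pow (by linarith : (-2:ℝ) ≤ -μ) N
        rw [show (1 + -μ) = x by rw [hxdef]; ring] at h
        linarith
      have hxN : (1:ℝ)/2 ≤ x^N := by linarith
      have h1 : 1 - x^N ≤ (N:ℝ)*μ := by linarith
      have h2 : (x/μ)*(1-x^N) ≤ (N:ℝ)*x := by
        have := mul_le_mul_of_nonneg_left h1 (div_nonneg hx0 hμ0.le)
        calc (x/μ)*(1-x^N) ≤ (x/μ)*((N:ℝ)*μ) := this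
          _ = (N:ℝ)*x := by field_simp
      have hN1 : (1:ℝ) ≤ (N:ℝ) := by exact_mod_cast hN
      nlinarith [mul_nonneg (le_trans zero_le_one hN1) hx0]
    · push_neg at hB
      set l : ℕ := ⌊1/(2*μ)⌋₊ with hldef
      have h2μ : (2:ℝ) ≤ 1/(2*μ) := by
        rw [le_div_iff₀ (by linarith)]; nlinarith
      have hl2 : 2 ≤ l := Nat.le_floor (by exact_mod_cast h2μ)
      have hlle : (l:ℝ) ≤ 1/(2*μ) := Nat.floor_le (by positivity)
      have hlN : l ≤ N := by
        have : (l:ℝ) < N := lt_of_le_of_lt hlle (by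
          rw [div_lt_iff₀ (by linarith)]; nlinarith)
        exact_mod_cast this.le
      have hlge : 1/(4*μ) ≤ (l:ℝ) := by
        have hfl : 1/(2*μ) - 1 < (l:ℝ) := Nat.sub_one_lt_floor _
        have ht : 1/(4*μ) = (1/(2*μ))/2 := by ring
        linarith
      have hlμ : (l:ℝ)*μ ≤ 1/2 := by
        have := mul_le_mul_of_nonneg_right hlle hμ0.le
        calc (l:ℝ)*μ ≤ (1/(2*μ))*μ := this
          _ = 1/2 := by field_simp
      have hxl : (1:ℝ)/2 ≤ x^l := by
        have h := one_add_mul_le_pow (by linarith : (-2:ℝ) ≤ -μ) l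
        rw [show (1 + -μ) = x by rw [hxdef]; ring] at h
        have : 1 - (l:ℝ)*μ ≤ x^l := by linarith [h]
        linarith
      refine ⟨l, Finset.mem_Icc.mpr ⟨le_trans (by norm_num) hl2, hlN⟩, ?_⟩
      have hA2 : (1/(4*μ))*(1/2) ≤ (l:ℝ)*x^l :=
        mul_le_mul hlge hxl (by norm_num) (by positivity)
      have heq : (1:ℝ)/μ = 8*((1/(4*μ))*(1/2)) := by field_simp; ring
      have hxle : x/μ ≤ 1/μ := by gcongr
      calc (x/μ)*(1-x^N) ≤ x/μ := hGle
        _ ≤ 1/μ := hxle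
        _ = 8*((1/(4*μ))*(1/2)) := heq
        _ ≤ 8*((l:ℝ)*x^l) := by linarith

theorem ndt_gap_le_twelve_NT_lt_NR (N_T N_R : ℕ) (hNT : 2 ≤ N_T) (hTN : N_T < N_R)
    (μR μT r : ℝ) (hμR0 : 0 < μR) (hμR1 : μR ≤ 1)
    (hμT0 : 0 ≤ μT) (hμT1 : μT ≤ 1) (hr : 0 < r) :
    (((N_T : ℝ) - 1) / N_T) * (1 - μR)
        + ((1 - μR) / (N_T * μR)) * (1 - (1 - μR) ^ N_R)
        + ((1 - μT) ^ N_T / r) * ((1 - μR) / μR) * (1 - (1 - μR) ^ N_R)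
      ≤ 12 * ((Finset.Icc 1 N_R).sup'
            (Finset.nonempty_Icc.mpr (le_trans (le_trans (by norm_num) hNT) (le_of_lt hTN)))
            (fun l => (l : ℝ) * (1 - μT) ^ N_T * (1 - μR) ^ l / r)
          + (Finset.Icc 1 N_R).sup'
            (Finset.nonempty_Icc.mpr (le_trans (le_trans (by norm_num) hNT) (le_of_lt hTN)))
            (fun l => (l : ℝ) * (1 - μR) ^ l / (min l N_T : ℕ))) := by
  have hNR1 : 1 ≤ N_R := le_trans (le_trans (by norm_num) hNT) hTN.le
  obtain ⟨l, hlmem, hG⟩ := key_geom_le μR hμR0 hμR1 N_R hNR1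
  have hx0 : (0:ℝ) ≤ 1 - μR := by linarith
  have hl1 : 1 ≤ l := (Finset.mem_Icc.mp hlmem).1
  have hA0 : (0:ℝ) ≤ (1 - μT) ^ N_T := pow_nonneg (by linarith) _
  set M : ℝ := (l:ℝ) * (1 - μR) ^ l with hMdef
  have hM0 : 0 ≤ M := mul_nonneg (by positivity) (pow_nonneg hx0 l)
  set ne := (Finset.nonempty_Icc.mpr (le_trans (le_trans (by norm_num : 1 ≤ 2) hNT) (le_of_lt hTN)) : (Finset.Icc 1 N_R).Nonempty)
  set S1 := (Finset.Icc 1 N_R).sup' ne (fun l => (l : ℝ) * (1 - μT) ^ N_T * (1 - μR) ^ l / r) with hS1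
  set S2 := (Finset.Icc 1 N_R).sup' ne (fun l => (l : ℝ) * (1 - μR) ^ l / (min l N_T : ℕ)) with hS2
  have h1mem : 1 ∈ Finset.Icc 1 N_R := Finset.mem_Icc.mpr ⟨le_rfl, hNR1⟩
  have hxS2 : 1 - μR ≤ S2 := by
    have hle := Finset.le_sup' (fun l : ℕ => (l : ℝ) * (1 - μR) ^ l / (min l N_T : ℕ)) h1mem
    have heq1 : ((1:ℕ):ℝ) * (1 - μR) ^ (1:ℕ) / ((min 1 N_T : ℕ):ℝ) = 1 - μR := by
      rw [min_eq_left (by omega : (1:ℕ) ≤ N_T)]; norm_num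
    rw [hS2]; rw [heq1] at hle; exact hle
  have hMS2 : M / N_T ≤ S2 := by
    have hle := Finset.le_sup' (fun l : ℕ => (l : ℝ) * (1 - μR) ^ l / (min l N_T : ℕ)) hlmem
    have hmin1 : 1 ≤ min l N_T := le_min hl1 (by omega)
    have hminpos : (0:ℝ) < ((min l N_T : ℕ) : ℝ) := by exact_mod_cast hmin1
    have hminle : ((min l N_T : ℕ) : ℝ) ≤ (N_T : ℝ) := by exact_mod_cast min_le_right l N_T
    have h2 : M / (N_T:ℝ) ≤ M / ((min l N_T : ℕ) : ℝ) := by gcongr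
    rw [hS2]; exact le_trans h2 hle
  have hAS1 : (1 - μT) ^ N_T * M / r ≤ S1 := by
    have hle := Finset.le_sup' (fun l : ℕ => (l : ℝ) * (1 - μT) ^ N_T * (1 - μR) ^ l / r) hlmem
    have heq2 : (1 - μT) ^ N_T * M / r = (l : ℝ) * (1 - μT) ^ N_T * (1 - μR) ^ l / r := by
      rw [hMdef]; ring
    rw [hS1, heq2]; exact hle
  have hNT0 : (0:ℝ) < (N_T:ℝ) := by exact_mod_cast lt_of_lt_of_le (by norm_num) hNT
  have hS20 : 0 ≤ S2 := le_trans hx0 hxS2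
  have hS10 : 0 ≤ S1 := le_trans (by positivity) hAS1
  have hT1 : (((N_T : ℝ) - 1) / N_T) * (1 - μR) ≤ 1 - μR := by
    have h : ((N_T : ℝ) - 1) / N_T ≤ 1 := by
      rw [div_le_one hNT0]; linarith
    nlinarith
  have hT2 : ((1 - μR) / (N_T * μR)) * (1 - (1 - μR) ^ N_R) ≤ 8 * S2 := by
    have heq : ((1 - μR) / (N_T * μR)) * (1 - (1 - μR) ^ N_R)
        = (((1 - μR) / μR) * (1 - (1 - μR) ^ N_R)) / N_T := by
      rw [div_mul_eq_div_div_swap]; ring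
    rw [heq]
    have h8 : (((1 - μR) / μR) * (1 - (1 - μR) ^ N_R)) / N_T ≤ (8 * M) / N_T := by
      gcongr
    calc (((1 - μR) / μR) * (1 - (1 - μR) ^ N_R)) / N_T ≤ (8 * M) / N_T := h8
      _ = 8 * (M / N_T) := by ring
      _ ≤ 8 * S2 := by linarith
  have hT3 : (1 - μT) ^ N_T / r * ((1 - μR) / μR) * (1 - (1 - μR) ^ N_R) ≤ 8 * S1 := by
    have hAr : (0:ℝ) ≤ (1 - μT) ^ N_T / r := by positivity
    have hmul : (1 - μT) ^ N_T / r * (((1 - μR) / μR) * (1 - (1 - μR) ^ N_R))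
        ≤ (1 - μT) ^ N_T / r * (8 * M) := mul_le_mul_of_nonneg_left hG hAr
    calc (1 - μT) ^ N_T / r * ((1 - μR) / μR) * (1 - (1 - μR) ^ N_R)
        = (1 - μT) ^ N_T / r * (((1 - μR) / μR) * (1 - (1 - μR) ^ N_R)) := by ring
      _ ≤ (1 - μT) ^ N_T / r * (8 * M) := hmul
      _ = 8 * ((1 - μT) ^ N_T * M / r) := by ring
      _ ≤ 8 * S1 := by linarith
  linarith [hT1, hT2, hT3, hxS2]
end
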